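/- arXiv:2106.00542 — 2 statements merged into one kernel-verified Lean document; each statement's English description precedes it below -/
import Mathlib

section
/- If limsup_{t→0} (η(t) − η(0))/φ(t) = 1 almost surely, then lim_{t→0} (E(η(t) − η(0))²)^{1/2} / φ(t) = 0; equivalently, φ(t) = (E(η(t) − η(0))²)^{1/2} h(t) for a function h with lim_{t↓0} h(t) = ∞. -/
open MeasureTheory ProbabilityTheory Filter Set
open scoped NNReal ENNReal Topology

private lemma aux_eventually_lt {α : Type*} (u : α → ℝ) {f : Filter α}
    (h : Filter.limsup u f = 1) : ∀ᶠ x in f, u x < 2 := by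
  by_contra hc
  have hS : ∀ a ∈ {a : ℝ | ∀ᶠ x in f, u x ≤ a}, (2:ℝ) ≤ a := by
    intro a ha
    by_contra h2
    push_neg at h2
    exact hc (ha.mono fun x hx => lt_of_le_of_lt hx h2)
  rw [Filter.limsup_eq] at h
  rcases eq_empty_or_nonempty {a : ℝ | ∀ᶠ x in f, u x ≤ a} with hS0 | hS0
  · rw [hS0] at h
    simp [Real.sInf_empty] at h
  · have := le_csInf hS0 hS
    rw [h] at this
    linarith

private lemma gauss_scale (v : ℝ≥0) :
    Measure.map (fun x => Real.sqrt v * x) (gaussianReal 0 1) = gaussianReal 0 v := by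
  have h := gaussianReal_map_const_mul (μ := 0) (v := 1) (Real.sqrt v)
  have h2 : (⟨(Real.sqrt v) ^ 2, sq_nonneg _⟩ : ℝ≥0) * 1 = v := by
    ext
    simp [Real.sq_sqrt v.coe_nonneg]
  rw [mul_zero] at h
  convert h using 2
  ext
  simp [Real.sq_sqrt v.coe_nonneg]

private lemma gauss_sq (v : ℝ≥0) :
    ∫ x, x ^ 2 ∂(gaussianReal 0 v) = (v : ℝ) * ∫ x, x ^ 2 ∂(gaussianReal 0 1) := by
  rw [← gauss_scale v, integral_map (f := fun x : ℝ => x ^ 2)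
    (measurable_const_mul _).aemeasurable
    (show Measurable fun x : ℝ => x ^ 2 by fun_prop).aestronglyMeasurable]
  simp_rw [mul_pow, Real.sq_sqrt v.coe_nonneg, integral_const_mul]

private lemma gauss_tail_pos (a : ℝ) : 0 < (gaussianReal 0 1 (Ici a)).toReal := by
  rw [gaussianReal_apply_eq_integral 0 one_ne_zero, ENNReal.toReal_ofReal
    (setIntegral_nonneg measurableSet_Ici fun x _ => gaussianPDFReal_nonneg 0 1 x)]
  rw [setIntegral_pos_iff_support_of_nonneg_ae
    (ae_of_all _ fun x => gaussianPDFReal_nonneg 0 1 x)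
    ((integrable_gaussianPDFReal 0 1).integrableOn)]
  have hsupp : Function.support (gaussianPDFReal 0 1) = univ := by
    ext x
    simp [Function.mem_support, (gaussianPDFReal_pos 0 1 x one_ne_zero).ne']
  rw [hsupp, univ_inter]
  simp [Real.volume_Ici]

/-- If `limsup_{t→0} (η(t) − η(0))/φ(t) = 1` a.s., then
`lim_{t→0} (E(η(t) − η(0))²)^{1/2}/φ(t) = 0`; equivalently
`φ(t) = (E(η(t) − η(0))²)^{1/2} h(t)` for a function `h` with `lim_{t↓0} h(t) = ∞`. -/
theorem phi_dominates_sigma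
    {Ω : Type*} [MeasurableSpace Ω] (P : Measure Ω) [IsProbabilityMeasure P]
    (η : ℝ → Ω → ℝ)
    (hmeas : ∀ t, Measurable (η t))
    (hGauss : ∀ (n : ℕ) (t : Fin n → ℝ) (a : Fin n → ℝ), (∀ j, t j ∈ Icc (0:ℝ) 1) →
      ∃ v : ℝ≥0, Measure.map (fun ω => ∑ j, a j * η (t j) ω) P = gaussianReal 0 v)
    (hcont : ∀ ω, ContinuousOn (fun t => η t ω) (Icc (0:ℝ) 1))
    (U : ℝ → ℝ → ℝ) (hU : ∀ s t, U s t = ∫ ω, η s ω * η t ω ∂P)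
    (hU0 : 0 < U 0 0)
    (δ : ℝ) (hδ : 0 < δ) (φ : ℝ → ℝ) (hφ : ∀ t ∈ Icc (0:ℝ) δ, 0 < φ t)
    (hlimsup : ∀ᵐ ω ∂P,
      Filter.limsup (fun t => (η t ω - η 0 ω) / φ t) (𝓝[>] (0:ℝ)) = 1) :
    Tendsto (fun t => Real.sqrt (∫ ω, (η t ω - η 0 ω) ^ 2 ∂P) / φ t)
      (𝓝[>] (0:ℝ)) (𝓝 0) := by
  set m : ℝ := ∫ x, x ^ 2 ∂(gaussianReal 0 1) with hm
  by_contra hten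
  rw [Metric.tendsto_nhds] at hten
  push_neg at hten
  obtain ⟨ε, hε, hfreq⟩ := hten
  set δ' : ℝ := min δ 1 with hδ'
  have hδ'pos : 0 < δ' := lt_min hδ one_pos
  have hmem : ∀ᶠ t in 𝓝[>] (0:ℝ), t ∈ Ioo 0 δ' :=
    Ioo_mem_nhdsGT_of_mem (left_mem_Ico.mpr hδ'pos)
  obtain ⟨ts, hts, hprop⟩ := exists_seq_forall_of_frequently (hfreq.and_eventually hmem)
  have htn : ∀ n, ts n ∈ Ioo 0 δ' := fun n => (hprop n).2
  have hts01 : ∀ n, ts n ∈ Icc (0:ℝ) 1 :=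
    fun n => ⟨(htn n).1.le, (htn n).2.le.trans (min_le_right _ _)⟩
  have hφn : ∀ n, 0 < φ (ts n) :=
    fun n => hφ _ ⟨(htn n).1.le, (htn n).2.le.trans (min_le_left _ _)⟩
  -- Gaussian law of increments
  have hGn : ∀ n, ∃ v : ℝ≥0,
      Measure.map (fun ω => η (ts n) ω - η 0 ω) P = gaussianReal 0 v := by
    intro n
    obtain ⟨v, hv⟩ := hGauss 2 ![ts n, 0] ![1, -1]
      (by
        intro j
        fin_cases j
        · exact hts01 n
        · exact ⟨le_refl 0, zero_le_one⟩)
    refine ⟨v, ?_⟩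
    have heq : (fun ω => ∑ j, (![1, -1] : Fin 2 → ℝ) j * η ((![ts n, 0] : Fin 2 → ℝ) j) ω)
        = fun ω => η (ts n) ω - η 0 ω := by
      funext ω
      simp [Fin.sum_univ_two]
      ring
    rwa [heq] at hv
  choose v hv using hGn
  -- second moment
  have hvar : ∀ n, ∫ ω, (η (ts n) ω - η 0 ω) ^ 2 ∂P = (v n : ℝ) * m := by
    intro n
    calc ∫ ω, (η (ts n) ω - η 0 ω) ^ 2 ∂P
        = ∫ x, x ^ 2 ∂(Measure.map (fun ω => η (ts n) ω - η 0 ω) P) :=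
          (integral_map (f := fun x : ℝ => x ^ 2) ((hmeas _).sub (hmeas _)).aemeasurable
            (show Measurable fun x : ℝ => x ^ 2 by fun_prop).aestronglyMeasurable).symm
      _ = ∫ x, x ^ 2 ∂(gaussianReal 0 (v n)) := by rw [hv n]
      _ = (v n : ℝ) * m := gauss_sq (v n)
  -- the lower bound on sqrt(v n * m)
  have hg : ∀ n, ε * φ (ts n) ≤ Real.sqrt ((v n : ℝ) * m) := by
    intro n
    have h1 := (hprop n).1
    rw [hvar n, Real.dist_eq, sub_zero,
      abs_of_nonneg (div_nonneg (Real.sqrt_nonneg _) (hφn n).le)] at h1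
    have h2 := (le_div_iff₀ (hφn n)).mp h1
    linarith
  have hm0 : 0 < m := by
    have h1 : 0 < Real.sqrt ((v 0 : ℝ) * m) :=
      lt_of_lt_of_le (mul_pos hε (hφn 0)) (hg 0)
    have h2 : 0 < (v 0 : ℝ) * m := Real.sqrt_pos.mp h1
    nlinarith [(v 0).coe_nonneg]
  have hsm : 0 < Real.sqrt m := Real.sqrt_pos.mpr hm0
  set a : ℝ := 2 * Real.sqrt m / ε with ha
  have hapos : 0 < a := by positivity
  -- lower bound on tail probabilities
  set A : ℕ → Set Ω := fun n => {ω | 2 * φ (ts n) ≤ η (ts n) ω - η 0 ω} with hA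
  have hAmeas : ∀ n, MeasurableSet (A n) :=
    fun n => measurableSet_le measurable_const ((hmeas _).sub (hmeas _))
  have key : ∀ n, gaussianReal 0 1 (Ici a) ≤ P (A n) := by
    intro n
    have hPA : P (A n) = gaussianReal 0 (v n) (Ici (2 * φ (ts n))) := by
      rw [← hv n, Measure.map_apply (f := fun ω => η (ts n) ω - η 0 ω) ((hmeas _).sub (hmeas _)) measurableSet_Ici]
      rfl
    rw [hPA, ← gauss_scale (v n),
      Measure.map_apply (measurable_const_mul _) measurableSet_Ici]
    refine measure_mono ?_
    intro x hx
    simp only [mem_preimage, mem_Ici] at hx ⊢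
    have hsv : ε * φ (ts n) / Real.sqrt m ≤ Real.sqrt (v n) := by
      rw [div_le_iff₀ hsm]
      calc ε * φ (ts n) ≤ Real.sqrt ((v n : ℝ) * m) := hg n
        _ = Real.sqrt (v n) * Real.sqrt m := Real.sqrt_mul (v n).coe_nonneg m
    calc 2 * φ (ts n) = (ε * φ (ts n) / Real.sqrt m) * a := by
          rw [ha]; field_simp
      _ ≤ Real.sqrt (v n) * a := mul_le_mul_of_nonneg_right hsv hapos.le
      _ ≤ Real.sqrt (v n) * x := mul_le_mul_of_nonneg_left hx (Real.sqrt_nonneg _)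
  -- a.s. the events eventually fail
  have hae : ∀ᵐ ω ∂P, ∀ᶠ n in atTop, ω ∉ A n := by
    filter_upwards [hlimsup] with ω hω
    have h2 := aux_eventually_lt _ hω
    filter_upwards [hts.eventually h2] with n hn hmemA
    have hlt := (div_lt_iff₀ (hφn n)).mp hn
    have := hmemA
    simp only [hA, mem_setOf_eq] at this
    linarith
  -- dominated convergence
  have hint : Tendsto (fun n => ∫ ω, (A n).indicator (fun _ => (1:ℝ)) ω ∂P) atTop
      (𝓝 (∫ _ω, (0:ℝ) ∂P)) := by
    refine tendsto_integral_of_dominated_convergence (fun _ => (1:ℝ))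
      (fun n => (measurable_one.indicator (hAmeas n)).aestronglyMeasurable)
      (integrable_const 1) (fun n => ae_of_all _ fun ω => ?_) ?_
    · by_cases hωA : ω ∈ A n <;>
        simp [indicator_of_mem, indicator_of_notMem, hωA]
    · filter_upwards [hae] with ω hω
      refine Tendsto.congr' ?_ (tendsto_const_nhds (x := (0:ℝ)))
      filter_upwards [hω] with n hn
      simp [indicator_of_notMem hn]
  rw [integral_zero] at hint
  have hlow : ∀ n, (gaussianReal 0 1 (Ici a)).toReal
      ≤ ∫ ω, (A n).indicator (fun _ => (1:ℝ)) ω ∂P := by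
    intro n
    rw [integral_indicator_const (1:ℝ) (hAmeas n), smul_eq_mul, mul_one]
    exact ENNReal.toReal_mono (measure_ne_top P _) (key n)
  have hfin := ge_of_tendsto hint (Eventually.of_forall hlow)
  exact absurd (lt_of_lt_of_le (gauss_tail_pos a) hfin) (lt_irrefl 0).elim
end

section
/- If limsup_{t→0} (η(t) − η(0))/φ(t) = 1 almost surely, then limsup_{t→0} |U(0,0) − U(0,t)| / (U(0,0) φ(t)) = 0. -/
open MeasureTheory ProbabilityTheory Filter Set
open scoped NNReal ENNReal Topology

namespace CovAux

lemma integrable_sq_gaussianReal (v : ℝ≥0) :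
    Integrable (fun x : ℝ => x ^ 2) (gaussianReal 0 v) := by
  by_cases hv : v = 0
  · rw [hv, gaussianReal_zero_var]
    refine ⟨(measurable_id.pow_const 2).aestronglyMeasurable, ?_⟩
    simp [HasFiniteIntegral, lintegral_dirac]
  · rw [gaussianReal_of_var_ne_zero _ hv,
      integrable_withDensity_iff (measurable_gaussianPDF _ _)
        (ae_of_all _ fun x => ENNReal.ofReal_lt_top)]
    have hvpos : (0:ℝ) < v := by
      exact_mod_cast pos_iff_ne_zero.mpr hv
    have hb : (0:ℝ) < (2 * (v:ℝ))⁻¹ := by positivity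
    have h := (integrable_rpow_mul_exp_neg_mul_sq hb (s := 2) (by norm_num)).const_mul
      ((Real.sqrt (2 * Real.pi * v))⁻¹)
    refine h.congr (ae_of_all _ fun x => ?_)
    show (√(2 * Real.pi * v))⁻¹ * (x ^ (2:ℝ) * Real.exp (-(2 * (v:ℝ))⁻¹ * x ^ 2))
      = x ^ 2 * (ENNReal.ofReal (gaussianPDFReal 0 v x)).toReal
    rw [ENNReal.toReal_ofReal (gaussianPDFReal_nonneg 0 v x), Real.rpow_two,
      show gaussianPDFReal 0 v x
        = (Real.sqrt (2 * Real.pi * v))⁻¹ * Real.exp (-(x - 0) ^ 2 / (2 * v)) from rfl]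
    have harg : -(x - 0) ^ 2 / (2 * (v:ℝ)) = -(2 * (v:ℝ))⁻¹ * x ^ 2 := by
      field_simp
      ring
    rw [harg]; ring


lemma memLp_id_gaussianReal (v : ℝ≥0) : MemLp id 2 (gaussianReal 0 v) :=
  (memLp_two_iff_integrable_sq aestronglyMeasurable_id).mpr
    (by simpa using integrable_sq_gaussianReal v)

lemma gaussianReal_eq_map {v : ℝ≥0} (hv : v ≠ 0) :
    gaussianReal 0 v = (gaussianReal 0 1).map (fun x => Real.sqrt v * x) := by
  rw [show (fun x : ℝ => Real.sqrt v * x) = (Real.sqrt v * ·) from rfl,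
    gaussianReal_map_const_mul]
  congr 1
  · simp
  · ext
    simp [Real.sq_sqrt (NNReal.coe_nonneg v)]

lemma integral_sq_gaussianReal (v : ℝ≥0) :
    ∫ x, x ^ 2 ∂(gaussianReal 0 v) = (v : ℝ) * ∫ x, x ^ 2 ∂(gaussianReal 0 1) := by
  by_cases hv : v = 0
  · simp [hv, gaussianReal_zero_var, integral_dirac]
  · rw [gaussianReal_eq_map hv,
      integral_map (by fun_prop) (by fun_prop)]
    simp_rw [mul_pow, Real.sq_sqrt (NNReal.coe_nonneg v)]
    rw [integral_const_mul]

lemma gaussianReal_Ici_pos {v : ℝ≥0} (hv : v ≠ 0) (a : ℝ) :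
    0 < gaussianReal 0 v (Ici a) := by
  rw [gaussianReal_of_var_ne_zero _ hv, withDensity_apply _ measurableSet_Ici,
    pos_iff_ne_zero]
  intro h0
  rw [lintegral_eq_zero_iff (measurable_gaussianPDF _ _), Filter.EventuallyEq,
    ae_restrict_iff' measurableSet_Ici, ae_iff] at h0
  have hsub : Ici a ⊆ {x | ¬ (x ∈ Ici a → gaussianPDF 0 v x = (fun _ => 0) x)} := by
    intro x hx
    simp only [mem_setOf_eq, Classical.not_imp]
    exact ⟨hx, (gaussianPDF_pos _ hv x).ne'⟩
  have := measure_mono_null hsub h0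
  rw [Real.volume_Ici] at this
  exact ENNReal.top_ne_zero this

lemma gaussianReal_Ici_eq {v : ℝ≥0} (hv : v ≠ 0) (a : ℝ) :
    gaussianReal 0 v (Ici a) = gaussianReal 0 1 (Ici (a / Real.sqrt v)) := by
  have hs : (0:ℝ) < Real.sqrt v := Real.sqrt_pos.mpr (by exact_mod_cast pos_iff_ne_zero.mpr hv)
  rw [gaussianReal_eq_map hv, Measure.map_apply (by fun_prop) measurableSet_Ici]
  congr 1
  ext x
  simp only [mem_preimage, mem_Ici]
  rw [div_le_iff₀ hs, mul_comm]

lemma integrable_mul {Ω : Type*} [MeasurableSpace Ω] {P : Measure Ω}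
    {f g : Ω → ℝ} (hf : MemLp f 2 P) (hg : MemLp g 2 P) :
    Integrable (fun ω => f ω * g ω) P := by
  refine Integrable.mono' ((hf.integrable_sq.add hg.integrable_sq).const_mul (1/2 : ℝ))
    (hf.aestronglyMeasurable.mul hg.aestronglyMeasurable) (ae_of_all _ fun ω => ?_)
  simp only [Real.norm_eq_abs, Pi.add_apply]
  rw [abs_le]
  constructor <;> nlinarith [sq_nonneg (f ω + g ω), sq_nonneg (f ω - g ω)]

lemma abs_integral_mul_le {Ω : Type*} [MeasurableSpace Ω] {P : Measure Ω}
    {f g : Ω → ℝ} (hf : MemLp f 2 P) (hg : MemLp g 2 P) :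
    |∫ ω, f ω * g ω ∂P| ≤
      Real.sqrt (∫ ω, f ω ^ 2 ∂P) * Real.sqrt (∫ ω, g ω ^ 2 ∂P) := by
  set A := ∫ ω, f ω ^ 2 ∂P with hA
  set B := ∫ ω, f ω * g ω ∂P with hB
  set C := ∫ ω, g ω ^ 2 ∂P with hC
  have hA0 : 0 ≤ A := integral_nonneg fun ω => sq_nonneg _
  have hC0 : 0 ≤ C := integral_nonneg fun ω => sq_nonneg _
  have hquad : ∀ x : ℝ, 0 ≤ C * (x * x) + (2 * B) * x + A := by
    intro x
    have hint : (fun ω => (f ω + x * g ω) ^ 2)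
        = fun ω => (x * x) * g ω ^ 2 + x * (2 * (f ω * g ω)) + f ω ^ 2 := by
      funext ω; ring
    have h1 : Integrable (fun ω => (x * x) * g ω ^ 2) P := hg.integrable_sq.const_mul _
    have h2 : Integrable (fun ω => x * (2 * (f ω * g ω))) P :=
      ((integrable_mul hf hg).const_mul 2).const_mul x
    have h3 := hf.integrable_sq
    have h12 : Integrable (fun ω => x * x * g ω ^ 2 + x * (2 * (f ω * g ω))) P := h1.add h2
    have hnn : 0 ≤ ∫ ω, (f ω + x * g ω) ^ 2 ∂P := integral_nonneg fun ω => sq_nonneg _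
    rw [hint, integral_add h12 h3, integral_add h1 h2, integral_const_mul,
      integral_const_mul, integral_const_mul] at hnn
    calc (0:ℝ) ≤ x * x * C + x * (2 * B) + A := hnn
    _ = C * (x * x) + (2 * B) * x + A := by ring
  have hd := discrim_le_zero (by simpa using hquad)
  rw [discrim] at hd
  have hBB : B ^ 2 ≤ A * C := by nlinarith [hd]
  calc |B| = Real.sqrt (B ^ 2) := (Real.sqrt_sq_eq_abs B).symm
  _ ≤ Real.sqrt (A * C) := Real.sqrt_le_sqrt hBB
  _ = Real.sqrt A * Real.sqrt C := Real.sqrt_mul hA0 C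

lemma le_measure_limsup {Ω : Type*} [MeasurableSpace Ω] (P : Measure Ω) [IsFiniteMeasure P]
    {A : ℕ → Set Ω} (hA : ∀ n, MeasurableSet (A n)) {c : ℝ≥0∞} (hc : ∀ n, c ≤ P (A n)) :
    c ≤ P (Filter.limsup A Filter.atTop) := by
  have hlim : Filter.limsup A Filter.atTop = ⋂ n, ⋃ i, ⋃ _ : n ≤ i, A i := by
    rw [Filter.limsup_eq_iInf_iSup_of_nat]; rfl
  set S : ℕ → Set Ω := fun n => ⋃ i, ⋃ _ : n ≤ i, A i with hS
  have hSmeas : ∀ n, NullMeasurableSet (S n) P := fun n =>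
    (MeasurableSet.iUnion fun i => MeasurableSet.iUnion fun _ => hA i).nullMeasurableSet
  have hsub' : ∀ m i, m ≤ i → A i ⊆ S m := by
    intro m i hi x hx
    simp only [hS, mem_iUnion]
    exact ⟨i, hi, hx⟩
  have hmono : Antitone S := by
    intro m n hmn
    simp only [hS]
    exact iUnion₂_subset fun i hi => hsub' m i (hmn.trans hi)
  have htend := tendsto_measure_iInter_atTop hSmeas hmono ⟨0, measure_ne_top P _⟩
  rw [hlim]
  exact ge_of_tendsto' htend fun n => le_trans (hc n) (measure_mono (hsub' n n le_rfl))

lemma limsup_ne_one_of_frequently_ge {f : ℝ → ℝ} {l : Filter ℝ}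
    (h : ∃ᶠ t in l, 2 ≤ f t) : Filter.limsup f l ≠ 1 := by
  intro h1
  rw [Filter.limsup_eq] at h1
  rcases Set.eq_empty_or_nonempty {a | ∀ᶠ t in l, f t ≤ a} with he | hne
  · rw [he, Real.sInf_empty] at h1
    exact one_ne_zero h1.symm
  · have h2 : (2:ℝ) ≤ sInf {a | ∀ᶠ t in l, f t ≤ a} := by
      refine le_csInf hne fun a ha => ?_
      obtain ⟨t, h2t, hta⟩ := (h.and_eventually ha).exists
      exact le_trans h2t hta
    rw [h1] at h2
    linarith

end CovAux

/-- If `limsup_{t→0} (η(t) − η(0))/φ(t) = 1` a.s., then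
`limsup_{t→0} |U(0,0) − U(0,t)|/(U(0,0) φ(t)) = 0`. -/
theorem covariance_increment_negligible
    {Ω : Type*} [MeasurableSpace Ω] (P : Measure Ω) [IsProbabilityMeasure P]
    (η : ℝ → Ω → ℝ)
    (hmeas : ∀ t, Measurable (η t))
    (hGauss : ∀ (n : ℕ) (t : Fin n → ℝ) (a : Fin n → ℝ), (∀ j, t j ∈ Icc (0:ℝ) 1) →
      ∃ v : ℝ≥0, Measure.map (fun ω => ∑ j, a j * η (t j) ω) P = gaussianReal 0 v)
    (hcont : ∀ ω, ContinuousOn (fun t => η t ω) (Icc (0:ℝ) 1))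
    (U : ℝ → ℝ → ℝ) (hU : ∀ s t, U s t = ∫ ω, η s ω * η t ω ∂P)
    (hU0 : 0 < U 0 0)
    (δ : ℝ) (hδ : 0 < δ) (φ : ℝ → ℝ) (hφ : ∀ t ∈ Icc (0:ℝ) δ, 0 < φ t)
    (hlimsup : ∀ᵐ ω ∂P,
      Filter.limsup (fun t => (η t ω - η 0 ω) / φ t) (𝓝[>] (0:ℝ)) = 1) :
    Filter.limsup (fun t => |U 0 0 - U 0 t| / (U 0 0 * φ t)) (𝓝[>] (0:ℝ)) = 0 := by
  classical
  set Cg : ℝ := ∫ x, x ^ 2 ∂(gaussianReal 0 1) with hCgdef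
  have h0mem : (0:ℝ) ∈ Icc (0:ℝ) 1 := ⟨le_refl 0, zero_le_one⟩
  -- single-time laws
  have hlaw_single : ∀ t ∈ Icc (0:ℝ) 1, ∃ v : ℝ≥0,
      Measure.map (η t) P = gaussianReal 0 v := by
    intro t ht
    obtain ⟨v, hv⟩ := hGauss 1 ![t] ![1] (fun j => by fin_cases j; simpa using ht)
    refine ⟨v, ?_⟩
    rw [← hv]
    congr 1
    funext ω
    simp
  -- increment laws, as a total function
  have hX : ∀ t ∈ Icc (0:ℝ) 1, ∃ v : ℝ≥0,
      Measure.map (fun ω => η t ω - η 0 ω) P = gaussianReal 0 v := by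
    intro t ht
    obtain ⟨v, hv⟩ := hGauss 2 ![t, 0] ![1, -1] (fun j => by
      fin_cases j
      · simpa using ht
      · simpa using h0mem)
    refine ⟨v, ?_⟩
    rw [← hv]
    congr 1
    funext ω
    simp [Fin.sum_univ_two]
    ring
  have hex : ∀ t : ℝ, ∃ v : ℝ≥0, t ∈ Icc (0:ℝ) 1 →
      Measure.map (fun ω => η t ω - η 0 ω) P = gaussianReal 0 v := by
    intro t
    by_cases h : t ∈ Icc (0:ℝ) 1
    · exact (hX t h).imp fun v hv => fun _ => hv
    · exact ⟨0, fun h' => absurd h' h⟩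
  choose w hw using hex
  have hXm : ∀ t, Measurable (fun ω => η t ω - η 0 ω) := fun t => (hmeas t).sub (hmeas 0)
  -- L² membership
  have hmemLp : ∀ t ∈ Icc (0:ℝ) 1, MemLp (η t) 2 P := by
    intro t ht
    obtain ⟨v, hv⟩ := hlaw_single t ht
    have h1 := CovAux.memLp_id_gaussianReal v
    rw [← hv] at h1
    exact (memLp_map_measure_iff aestronglyMeasurable_id (hmeas t).aemeasurable).mp h1
  have hmem0 : MemLp (η 0) 2 P := hmemLp 0 h0mem
  -- second moments
  have hsqX : ∀ t ∈ Icc (0:ℝ) 1, ∫ ω, (η t ω - η 0 ω) ^ 2 ∂P = (w t : ℝ) * Cg := by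
    intro t ht
    have h1 : ∫ x, x ^ 2 ∂(Measure.map (fun ω => η t ω - η 0 ω) P)
        = ∫ ω, (η t ω - η 0 ω) ^ 2 ∂P :=
      integral_map (hXm t).aemeasurable ((measurable_id.pow_const 2).aestronglyMeasurable)
    rw [← h1, hw t ht, CovAux.integral_sq_gaussianReal]
  obtain ⟨v₀, hv₀⟩ := hlaw_single 0 h0mem
  have hsq0 : ∫ ω, η 0 ω ^ 2 ∂P = (v₀ : ℝ) * Cg := by
    have h1 : ∫ x, x ^ 2 ∂(Measure.map (η 0) P) = ∫ ω, η 0 ω ^ 2 ∂P :=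
      integral_map (hmeas 0).aemeasurable ((measurable_id.pow_const 2).aestronglyMeasurable)
    rw [← h1, hv₀, CovAux.integral_sq_gaussianReal]
  have hU00 : U 0 0 = (v₀ : ℝ) * Cg := by
    rw [hU 0 0, ← hsq0]
    congr 1
    funext ω
    ring
  have hCg0 : 0 ≤ Cg := integral_nonneg fun x => sq_nonneg x
  have hprod : 0 < (v₀ : ℝ) * Cg := hU00 ▸ hU0
  have hv0pos : 0 < (v₀ : ℝ) := by
    rcases lt_or_eq_of_le (NNReal.coe_nonneg v₀) with h | h
    · exact h
    · rw [← h, zero_mul] at hprod; exact absurd hprod (lt_irrefl 0)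
  have hCpos : 0 < Cg := by
    rcases lt_or_eq_of_le hCg0 with h | h
    · exact h
    · rw [← h, mul_zero] at hprod; exact absurd hprod (lt_irrefl 0)
  -- Cauchy–Schwarz bound
  have hCS : ∀ t ∈ Icc (0:ℝ) 1, |U 0 0 - U 0 t| ≤
      Real.sqrt ((v₀ : ℝ) * Cg) * Real.sqrt ((w t : ℝ) * Cg) := by
    intro t ht
    have hmemt := hmemLp t ht
    have hdiff : U 0 0 - U 0 t = ∫ ω, η 0 ω * (η 0 ω - η t ω) ∂P := by
      rw [hU 0 0, hU 0 t,
        ← integral_sub (CovAux.integrable_mul hmem0 hmem0) (CovAux.integrable_mul hmem0 hmemt)]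
      congr 1
      funext ω
      ring
    have hg2 : ∫ ω, (η 0 ω - η t ω) ^ 2 ∂P = (w t : ℝ) * Cg := by
      rw [← hsqX t ht]
      congr 1
      funext ω
      ring
    have hcs := CovAux.abs_integral_mul_le (g := fun ω => η 0 ω - η t ω) hmem0 (hmem0.sub hmemt)
    rw [hsq0, hg2] at hcs
    rw [hdiff]
    exact hcs
  -- setup for the limit
  set m : ℝ := min δ 1 with hmdef
  have hm : 0 < m := lt_min hδ one_pos
  have hIoo : Ioo (0:ℝ) m ∈ 𝓝[>] (0:ℝ) := Ioo_mem_nhdsGT_of_mem ⟨le_refl 0, hm⟩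
  have hsub1 : ∀ t ∈ Ioo (0:ℝ) m, t ∈ Icc (0:ℝ) 1 := fun t ht =>
    ⟨ht.1.le, ht.2.le.trans (min_le_right _ _)⟩
  have hsubδ : ∀ t ∈ Ioo (0:ℝ) m, t ∈ Icc (0:ℝ) δ := fun t ht =>
    ⟨ht.1.le, ht.2.le.trans (min_le_left _ _)⟩
  -- the key limit
  have hkey : Tendsto (fun t => Real.sqrt (w t : ℝ) / φ t) (𝓝[>] (0:ℝ)) (𝓝 0) := by
    rw [Metric.tendsto_nhds]
    intro ε hε
    by_contra hcon
    rw [Filter.not_eventually] at hcon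
    have hfreq : ∃ᶠ t in 𝓝[>] (0:ℝ),
        (t ∈ Ioo (0:ℝ) m ∧ ε * φ t ≤ Real.sqrt (w t : ℝ)) := by
      refine (hcon.and_eventually (eventually_of_mem hIoo fun t ht => ht)).mono ?_
      rintro t ⟨hd, htm⟩
      refine ⟨htm, ?_⟩
      have hφt := hφ t (hsubδ t htm)
      rw [Real.dist_eq, sub_zero, not_lt,
        abs_of_nonneg (div_nonneg (Real.sqrt_nonneg _) hφt.le), le_div_iff₀ hφt] at hd
      exact hd
    obtain ⟨u, hu_t, hu_p⟩ := exists_seq_forall_of_frequently hfreq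
    set A : ℕ → Set Ω := fun n => {ω | 2 * φ (u n) ≤ η (u n) ω - η 0 ω} with hAdef
    have hAmeas : ∀ n, MeasurableSet (A n) := fun n =>
      measurableSet_le measurable_const ((hmeas (u n)).sub (hmeas 0))
    have hwne : ∀ n, w (u n) ≠ 0 := by
      intro n h0
      have h1 := (hu_p n).2
      have hφu := hφ _ (hsubδ _ (hu_p n).1)
      rw [h0] at h1
      simp only [NNReal.coe_zero, Real.sqrt_zero] at h1
      nlinarith [mul_pos hε hφu]
    have hPA : ∀ n, gaussianReal 0 1 (Ici (2 / ε)) ≤ P (A n) := by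
      intro n
      obtain ⟨htm, hwt⟩ := hu_p n
      have hφu := hφ _ (hsubδ _ htm)
      have hPAn : P (A n) = Measure.map (fun ω => η (u n) ω - η 0 ω) P (Ici (2 * φ (u n))) := by
        rw [Measure.map_apply (hXm (u n)) measurableSet_Ici]
        rfl
      rw [hPAn, hw (u n) (hsub1 _ htm), CovAux.gaussianReal_Ici_eq (hwne n)]
      refine measure_mono (Ici_subset_Ici.mpr ?_)
      have hs : (0:ℝ) < Real.sqrt (w (u n) : ℝ) := lt_of_lt_of_le (mul_pos hε hφu) hwt
      rw [div_le_div_iff₀ hs hε]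
      nlinarith [hwt]
    have hc0 : 0 < gaussianReal 0 1 (Ici (2 / ε)) := CovAux.gaussianReal_Ici_pos one_ne_zero _
    have hPlim := CovAux.le_measure_limsup P hAmeas hPA
    have hNe : (Filter.limsup A Filter.atTop \
        {ω | ¬ Filter.limsup (fun t => (η t ω - η 0 ω) / φ t) (𝓝[>] (0:ℝ)) = 1}).Nonempty := by
      apply nonempty_of_measure_ne_zero (μ := P)
      rw [measure_diff_null (ae_iff.mp hlimsup)]
      exact (lt_of_lt_of_le hc0 hPlim).ne'
    obtain ⟨ω, hωE, hωG⟩ := hNe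
    simp only [mem_setOf_eq, not_not] at hωG
    have hωlim : Filter.limsup (fun t => (η t ω - η 0 ω) / φ t) (𝓝[>] (0:ℝ)) = 1 := hωG
    have hfr : ∃ᶠ n in Filter.atTop, ω ∈ A n := mem_limsup_iff_frequently_mem.mp hωE
    have hfr2 : ∃ᶠ t in 𝓝[>] (0:ℝ), 2 ≤ (η t ω - η 0 ω) / φ t := by
      refine hu_t.frequently (hfr.mono fun n hn => ?_)
      have hφu := hφ _ (hsubδ _ (hu_p n).1)
      rw [le_div_iff₀ hφu]
      exact hn
    exact CovAux.limsup_ne_one_of_frequently_ge hfr2 hωlim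
  -- conclude
  have hT : Tendsto (fun t => |U 0 0 - U 0 t| / (U 0 0 * φ t)) (𝓝[>] (0:ℝ)) (𝓝 0) := by
    set K : ℝ := Real.sqrt ((v₀ : ℝ) * Cg) * Real.sqrt Cg / ((v₀ : ℝ) * Cg) with hKdef
    have hK : Tendsto (fun t => K * (Real.sqrt (w t : ℝ) / φ t)) (𝓝[>] (0:ℝ)) (𝓝 0) := by
      simpa using hkey.const_mul K
    apply squeeze_zero' ?_ ?_ hK
    · filter_upwards [hIoo] with t ht
      have hφt := hφ t (hsubδ t ht)
      exact div_nonneg (abs_nonneg _) (mul_nonneg hU0.le hφt.le)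
    · filter_upwards [hIoo] with t ht
      have hφt := hφ t (hsubδ t ht)
      have h1 := hCS t (hsub1 t ht)
      have hrhs : K * (Real.sqrt (w t : ℝ) / φ t)
          = (Real.sqrt ((v₀ : ℝ) * Cg) * Real.sqrt ((w t : ℝ) * Cg)) / ((v₀ : ℝ) * Cg * φ t) := by
        rw [Real.sqrt_mul (NNReal.coe_nonneg (w t)), hKdef]
        field_simp
      rw [hU00, hrhs]
      rw [hU00] at h1
      exact (div_le_div_iff_of_pos_right (mul_pos hprod hφt)).mpr h1
  exact hT.limsup_eq
end
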